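/- For any two finite graphs G and H without isolated vertices, the domatic number of the Cartesian product satisfies d(G □ H) ≤ max{|V(G)|, |V(H)|}. -/

import Mathlib

open SimpleGraph Finset

/-- A domatic `k`-coloring: every vertex sees all `k` colors in its closed neighborhood. -/
def IsDomaticColoring {V : Type*} (G : SimpleGraph V) (k : ℕ) (f : V → Fin k) : Prop :=
  ∀ v : V, ∀ c : Fin k, ∃ u : V, (u = v ∨ G.Adj v u) ∧ f u = c

/-- A total domatic `k`-coloring: every vertex sees all `k` colors in its open neighborhood. -/
def IsTotalDomaticColoring {V : Type*} (G : SimpleGraph V) (k : ℕ) (f : V → Fin k) : Prop :=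
  ∀ v : V, ∀ c : Fin k, ∃ u : V, G.Adj v u ∧ f u = c

/-- The domatic number `d(G)`. -/
noncomputable def domaticNumber {V : Type*} (G : SimpleGraph V) : ℕ :=
  sSup {k | ∃ f : V → Fin k, IsDomaticColoring G k f}

/-- The total domatic number `d_t(G)`. -/
noncomputable def totalDomaticNumber {V : Type*} (G : SimpleGraph V) : ℕ :=
  sSup {k | ∃ f : V → Fin k, IsTotalDomaticColoring G k f}

def IsDominatingSet {V : Type*} (G : SimpleGraph V) (D : Set V) : Prop :=
  ∀ v : V, v ∈ D ∨ ∃ u ∈ D, G.Adj v u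

def IsTotalDominatingSet {V : Type*} (G : SimpleGraph V) (D : Set V) : Prop :=
  ∀ v : V, ∃ u ∈ D, G.Adj v u

noncomputable def dominationNumber {V : Type*} (G : SimpleGraph V) [Fintype V] : ℕ :=
  sInf {n | ∃ D : Finset V, D.card = n ∧ IsDominatingSet G ↑D}

noncomputable def totalDominationNumber {V : Type*} (G : SimpleGraph V) [Fintype V] : ℕ :=
  sInf {n | ∃ D : Finset V, D.card = n ∧ IsTotalDominatingSet G ↑D}

/-- An injective `k`-coloring: vertices with a common neighbor get distinct colors. -/
def IsInjectiveColoring {V : Type*} (G : SimpleGraph V) (k : ℕ) (f : V → Fin k) : Prop :=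
  ∀ u w v : V, G.Adj v u → G.Adj v w → u ≠ w → f u ≠ f w

noncomputable def injChromaticNumber {V : Type*} (G : SimpleGraph V) : ℕ :=
  sInf {k | ∃ f : V → Fin k, IsInjectiveColoring G k f}

def NoIsolated {V : Type*} (G : SimpleGraph V) : Prop := ∀ v : V, ∃ u, G.Adj v u

/-- The Hamming graph `H(n,q)`: vertices differ in exactly one coordinate. -/
def hammingGraph (n q : ℕ) : SimpleGraph (Fin n → Fin q) :=
  SimpleGraph.fromRel (fun x y => ∃ i, x i ≠ y i ∧ ∀ j, j ≠ i → x j = y j)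

/-- The hypercube `Q n`. -/
def hypercube (n : ℕ) : SimpleGraph (Fin n → Fin 2) := hammingGraph n 2

/-- The torus `C_{k 0} □ ⋯ □ C_{k (d-1)}`. -/
def torusGraph (d : ℕ) (k : Fin d → ℕ) : SimpleGraph (∀ i : Fin d, ZMod (k i)) :=
  SimpleGraph.fromRel (fun x y => ∃ i, x i = y i + 1 ∧ ∀ j, j ≠ i → x j = y j)

theorem domatic_boxProd_le_max_card {V W : Type*} [Fintype V] [Fintype W]
    (G : SimpleGraph V) (H : SimpleGraph W) (hG : NoIsolated G) (hH : NoIsolated H) :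
    domaticNumber (G □ H) ≤ max (Fintype.card V) (Fintype.card W) := by
  classical
  by_cases hne : Nonempty V ∧ Nonempty W
  · obtain ⟨hV, hW⟩ := hne
    set n := Fintype.card V with hn
    set m := Fintype.card W with hm
    have hVpos : 0 < n := Fintype.card_pos
    have hWpos : 0 < m := Fintype.card_pos
    have hmem : (1 : ℕ) ∈ {k | ∃ f : V × W → Fin k, IsDomaticColoring (G □ H) k f} :=
      ⟨fun _ => 0, fun v c => ⟨v, Or.inl rfl, Subsingleton.elim _ _⟩⟩
    apply csSup_le ⟨1, hmem⟩
    rintro k ⟨f, hf⟩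
    -- each color class has card ≥ min n m
    have hclass : ∀ c : Fin k, min n m ≤ (Finset.univ.filter (fun x => f x = c)).card := by
      intro c
      by_contra hlt
      push_neg at hlt
      set D := Finset.univ.filter (fun x => f x = c) with hD
      have h1 : (D.image Prod.fst).card < n := lt_of_le_of_lt
        (Finset.card_image_le) (lt_of_lt_of_le hlt (min_le_left _ _))
      have h2 : (D.image Prod.snd).card < m := lt_of_le_of_lt
        (Finset.card_image_le) (lt_of_lt_of_le hlt (min_le_right _ _))
      obtain ⟨v, hv⟩ : ∃ v : V, v ∉ D.image Prod.fst := by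
        by_contra h; push_neg at h
        have := Finset.card_le_card (fun x _ => h x : Finset.univ ⊆ D.image Prod.fst)
        simp only [Finset.card_univ] at this; omega
      obtain ⟨w, hw⟩ : ∃ w : W, w ∉ D.image Prod.snd := by
        by_contra h; push_neg at h
        have := Finset.card_le_card (fun x _ => h x : Finset.univ ⊆ D.image Prod.snd)
        simp only [Finset.card_univ] at this; omega
      obtain ⟨u, hu, hfu⟩ := hf (v, w) c
      have huD : u ∈ D := by simp [hD, hfu]
      rcases hu with h | hadj
      · exact hv (Finset.mem_image.mpr ⟨u, huD, by rw [h]⟩)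
      · rw [SimpleGraph.boxProd_adj] at hadj
        rcases hadj with ⟨-, h2'⟩ | ⟨-, h1'⟩
        · exact hw (Finset.mem_image.mpr ⟨u, huD, h2'.symm⟩)
        · exact hv (Finset.mem_image.mpr ⟨u, huD, h1'.symm⟩)
    have hsum : (Finset.univ : Finset (Fin k)).sum
        (fun c => (Finset.univ.filter (fun x => f x = c)).card) = n * m := by
      rw [← Finset.card_eq_sum_card_fiberwise (fun x _ => Finset.mem_univ (f x))]
      simp [Fintype.card_prod, hn, hm]
    have hkmin : k * min n m ≤ n * m := by
      calc k * min n m = (Finset.univ : Finset (Fin k)).sum (fun _ => min n m) := by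
            simp [Finset.sum_const, Nat.mul_comm]
        _ ≤ _ := Finset.sum_le_sum (fun c _ => hclass c)
        _ = n * m := hsum
    have hminmax : min n m * max n m = n * m := min_mul_max n m
    have : k * min n m ≤ max n m * min n m := by rw [Nat.mul_comm (max n m)]; omega
    exact Nat.le_of_mul_le_mul_right this (lt_min hVpos hWpos)
  · have hemp : IsEmpty (V × W) := by
      rw [not_and_or] at hne
      rcases hne with h | h
      · exact ⟨fun x => h ⟨x.1⟩⟩
      · exact ⟨fun x => h ⟨x.2⟩⟩
    have : ¬ BddAbove {k | ∃ f : V × W → Fin k, IsDomaticColoring (G □ H) k f} := by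
      rintro ⟨b, hb⟩
      have : b + 1 ≤ b := hb ⟨fun x => hemp.elim x, fun v => hemp.elim v⟩
      omega
    rw [domaticNumber, csSup_of_not_bddAbove this, csSup_empty]
    exact Nat.zero_le _
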